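/- Let p be a prime, G a finite group, S a Sylow p-subgroup of G, and Q ⊴ P ≤ S. Assume that P is fully normalized, i.e. |N_S(P)| ≥ |N_S(gPg⁻¹)| for every g ∈ G with gPg⁻¹ ≤ S, and that C_S(gQg⁻¹) ≤ P for every g ∈ N_G(P). Then Q is fully centralized, i.e. |C_S(Q)| ≥ |C_S(gQg⁻¹)| for every g ∈ G with gQg⁻¹ ≤ S. -/

import Mathlib

/-- The conjugate `gPg⁻¹` of a subgroup. -/
def conjSub {G : Type} [Group G] (g : G) (P : Subgroup G) : Subgroup G :=
  Subgroup.map (MulAut.conj g).toMonoidHom P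

open Subgroup Pointwise


section helpers

variable {G : Type} [Group G]

theorem mem_conjSub {g y : G} {H : Subgroup G} :
    y ∈ conjSub g H ↔ ∃ x ∈ H, g * x * g⁻¹ = y := by
  simp only [conjSub, Subgroup.mem_map, MulEquiv.coe_toMonoidHom, MulAut.conj_apply]

theorem conjSub_mem {g x : G} {H : Subgroup G} (hx : x ∈ H) : g * x * g⁻¹ ∈ conjSub g H :=
  mem_conjSub.mpr ⟨x, hx, rfl⟩

theorem card_conjSub (g : G) (H : Subgroup G) : Nat.card (conjSub g H) = Nat.card H :=
  (Nat.card_congr (H.equivMapOfInjective (MulAut.conj g).toMonoidHom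
    (MulAut.conj g).injective).toEquiv).symm

theorem conjSub_isPGroup {p : ℕ} {g : G} {H : Subgroup G} (h : IsPGroup p H) :
    IsPGroup p (conjSub g H) := h.map _

theorem mem_normalizer_of_conj [Finite G] {g : G} {H : Subgroup G}
    (hg : ∀ x ∈ H, g * x * g⁻¹ ∈ H) : g ∈ Subgroup.normalizer (H : Set G) :=
  Subgroup.mem_normalizer_fintype hg

theorem conj_mem_of_mem_normalizer {g x : G} {H : Subgroup G}
    (hg : g ∈ Subgroup.normalizer (H : Set G)) (hx : x ∈ H) : g * x * g⁻¹ ∈ H :=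
  (Subgroup.mem_normalizer_iff.mp hg x).mp hx

theorem mem_of_conj_mem_normalizer {g x : G} {H : Subgroup G}
    (hg : g ∈ Subgroup.normalizer (H : Set G)) (hx : g * x * g⁻¹ ∈ H) : x ∈ H :=
  (Subgroup.mem_normalizer_iff.mp hg x).mpr hx

theorem eq_of_le_of_card_le' [Finite G] {H K : Subgroup G}
    (h : H ≤ K) (hc : Nat.card K ≤ Nat.card H) : H = K := by
  have e : Nat.card (H.subgroupOf K) = Nat.card H :=
    Nat.card_congr (Subgroup.subgroupOfEquivOfLe h).toEquiv
  have htop : H.subgroupOf K = ⊤ :=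
    Subgroup.eq_top_of_card_eq _ (le_antisymm (Subgroup.card_le_card_group _) (e ▸ hc))
  exact le_antisymm h (Subgroup.subgroupOf_eq_top.mp htop)

end helpers

section pgl
variable {p : ℕ} [Fact p.Prime] {G : Type} [Group G] [Finite G]

theorem pgroup_le_of_normalizer_inf_le {U P T : Subgroup G} (hU : IsPGroup p U)
    (hPU : P ≤ U) (hTU : T ≤ U) (hT : ∀ u ∈ U, ∀ t ∈ T, u * t * u⁻¹ ∈ T)
    (hNT : T ⊓ Subgroup.normalizer (P : Set G) ≤ P) : T ≤ P := by
  set Y := P ⊔ T with hYdef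
  have hPY : P ≤ Y := le_sup_left
  have hTY : T ≤ Y := le_sup_right
  have hYU : Y ≤ U := sup_le hPU hTU
  haveI : (T.subgroupOf Y).Normal := by
    constructor
    rintro ⟨t, htY⟩ ht ⟨y, hyY⟩
    have : y * t * y⁻¹ ∈ T := hT y (hYU hyY) t (Subgroup.mem_subgroupOf.mp ht)
    exact Subgroup.mem_subgroupOf.mpr this
  have hsup : P.subgroupOf Y ⊔ T.subgroupOf Y = ⊤ := by
    apply Subgroup.map_injective Y.subtype_injective
    rw [Subgroup.map_sup, Subgroup.subgroupOf_map_subtype, Subgroup.subgroupOf_map_subtype,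
      inf_eq_left.mpr hPY, inf_eq_left.mpr hTY, ← MonoidHom.range_eq_map, Subgroup.range_subtype]
  have hnil : Group.IsNilpotent ↥Y := (hU.to_le hYU).isNilpotent
  have hnc := normalizerCondition_iff_only_full_group_self_normalizing.mp
    (normalizerCondition_of_isNilpotent (G := ↥Y))
  have hPtop : P.subgroupOf Y = ⊤ := by
    apply hnc
    apply le_antisymm _ Subgroup.le_normalizer
    intro x hx
    have hx2 : (x : ↥Y) ∈ ((P.subgroupOf Y ⊔ T.subgroupOf Y : Subgroup ↥Y) : Set ↥Y) := by
      rw [hsup]; trivial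
    rw [Subgroup.mul_normal] at hx2
    obtain ⟨a, ha, t, ht, hx3⟩ := hx2
    have hta : t ∈ Subgroup.normalizer ((P.subgroupOf Y : Subgroup ↥Y) : Set ↥Y) := by
      have h4 : t = a⁻¹ * x := by rw [← hx3]; group
      rw [h4]; exact mul_mem (Subgroup.le_normalizer (inv_mem ha)) hx
    have htP : (t : G) ∈ Subgroup.normalizer (P : Set G) := by
      apply mem_normalizer_of_conj
      intro g hg
      have hgY : g ∈ Y := hPY hg
      have h5 : (⟨g, hgY⟩ : ↥Y) ∈ P.subgroupOf Y := Subgroup.mem_subgroupOf.mpr hg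
      have h6 := conj_mem_of_mem_normalizer hta h5
      exact Subgroup.mem_subgroupOf.mp h6
    have htT : (t : G) ∈ T := Subgroup.mem_subgroupOf.mp ht
    have htP2 : t ∈ P.subgroupOf Y := Subgroup.mem_subgroupOf.mpr (hNT ⟨htT, htP⟩)
    rw [← hx3]
    exact mul_mem ha htP2
  exact fun x hx => Subgroup.subgroupOf_eq_top.mp hPtop (hTY hx)

end pgl

section L2
variable {p : ℕ} [Fact p.Prime] {G : Type} [Group G] [Finite G]

theorem isPGroup_subgroupOf {H K : Subgroup G} (h : IsPGroup p H) (hHK : H ≤ K) :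
    IsPGroup p (H.subgroupOf K) :=
  h.of_equiv (Subgroup.subgroupOfEquivOfLe hHK).symm

theorem conj_into_NS (S : Sylow p G) (P : Subgroup G) (hPS : P ≤ (S : Subgroup G))
    (hfullnorm : ∀ g : G, (∀ x ∈ P, g * x * g⁻¹ ∈ (S : Subgroup G)) →
      Nat.card ((S : Subgroup G) ⊓ Subgroup.normalizer ((conjSub g P : Subgroup G) : Set G) : Subgroup G) ≤
        Nat.card ((S : Subgroup G) ⊓ Subgroup.normalizer (P : Set G) : Subgroup G))
    (D : Subgroup G) (hDN : D ≤ Subgroup.normalizer (P : Set G)) (hD : IsPGroup p D) :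
    ∃ n ∈ Subgroup.normalizer (P : Set G), ∀ x ∈ D, n * x * n⁻¹ ∈ (S : Subgroup G) ⊓ Subgroup.normalizer (P : Set G) := by
  set N := Subgroup.normalizer (P : Set G) with hNdef
  have hPN : P ≤ N := Subgroup.le_normalizer
  have hPpg : IsPGroup p P := S.isPGroup'.to_le hPS
  haveI hP'n : (P.subgroupOf N).Normal := Subgroup.normal_in_normalizer
  have claim1 : ∀ R : Sylow p ↥N,
      Nat.card R ≤ Nat.card ((S : Subgroup G) ⊓ N : Subgroup G) := by
    intro R
    have hP'R : P.subgroupOf N ≤ (R : Subgroup ↥N) := by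
      obtain ⟨R₂, hR₂⟩ := (isPGroup_subgroupOf hPpg hPN).exists_le_sylow
      obtain ⟨n, hn⟩ := MulAction.exists_smul_eq ↥N R₂ R
      intro x hxm
      have h1 : (x : ↥N) ∈ MulAut.conj n • (R₂ : Subgroup ↥N) := by
        rw [Subgroup.mem_pointwise_smul_iff_inv_smul_mem]
        refine hR₂ ?_
        simpa using hP'n.conj_mem x hxm n⁻¹
      rw [← hn, Sylow.coe_subgroup_smul]
      exact h1
    have hPle : P ≤ Subgroup.map N.subtype (R : Subgroup ↥N) := by
      calc P = Subgroup.map N.subtype (P.subgroupOf N) := by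
            rw [Subgroup.subgroupOf_map_subtype, inf_eq_left.mpr hPN]
        _ ≤ _ := Subgroup.map_mono hP'R
    set Rg := Subgroup.map N.subtype (R : Subgroup ↥N) with hRg
    have hRgpg : IsPGroup p Rg := R.isPGroup'.map _
    obtain ⟨S₁, hS₁⟩ := hRgpg.exists_le_sylow
    obtain ⟨x, hx⟩ := MulAction.exists_smul_eq G S S₁
    have key : ∀ y ∈ Rg, x⁻¹ * y * x⁻¹⁻¹ ∈ (S : Subgroup G) := by
      intro y hy
      have h2 : y ∈ (↑(x • S) : Subgroup G) := by rw [hx]; exact hS₁ hy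
      rw [Sylow.coe_subgroup_smul, Subgroup.mem_pointwise_smul_iff_inv_smul_mem] at h2
      simpa using h2
    have hcard := hfullnorm x⁻¹ (fun a ha => key a (hPle ha))
    have hsub : conjSub x⁻¹ Rg ≤ (S : Subgroup G) ⊓ Subgroup.normalizer ((conjSub x⁻¹ P : Subgroup G) : Set G) := by
      intro y hy
      obtain ⟨r, hr, rfl⟩ := mem_conjSub.mp hy
      refine ⟨key r hr, ?_⟩
      have hRgN : Rg ≤ Subgroup.normalizer (P : Set G) := Subgroup.map_subtype_le _
      have h3 : conjSub x⁻¹ Rg ≤ Subgroup.normalizer ((conjSub x⁻¹ P : Subgroup G) : Set G) :=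
        calc conjSub x⁻¹ Rg ≤ Subgroup.map _ (Subgroup.normalizer (P : Set G)) := Subgroup.map_mono hRgN
          _ ≤ _ := Subgroup.le_normalizer_map _
      exact h3 (conjSub_mem hr)
    have e1 : Nat.card R = Nat.card Rg := Nat.card_congr
      ((R : Subgroup ↥N).equivMapOfInjective N.subtype N.subtype_injective).toEquiv
    calc Nat.card R = Nat.card (conjSub x⁻¹ Rg) := by rw [e1, card_conjSub]
      _ ≤ Nat.card ((S : Subgroup G) ⊓ Subgroup.normalizer ((conjSub x⁻¹ P : Subgroup G) : Set G) : Subgroup G) :=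
          Subgroup.card_le_of_le hsub
      _ ≤ _ := hcard
  have hNSpg : IsPGroup p ((S : Subgroup G) ⊓ N : Subgroup G) := S.isPGroup'.to_inf_left
  obtain ⟨R₁, hR₁⟩ := (isPGroup_subgroupOf hNSpg inf_le_right).exists_le_sylow
  have hcard1 : Nat.card (((S : Subgroup G) ⊓ N).subgroupOf N) =
      Nat.card ((S : Subgroup G) ⊓ N : Subgroup G) :=
    Nat.card_congr (Subgroup.subgroupOfEquivOfLe inf_le_right).toEquiv
  have hR₁eq : ((S : Subgroup G) ⊓ N).subgroupOf N = (R₁ : Subgroup ↥N) :=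
    eq_of_le_of_card_le' hR₁ (by rw [hcard1]; exact claim1 R₁)
  obtain ⟨R₂, hR₂⟩ := (isPGroup_subgroupOf hD hDN).exists_le_sylow
  obtain ⟨n, hn⟩ := MulAction.exists_smul_eq ↥N R₂ R₁
  refine ⟨(n : G), n.2, ?_⟩
  intro x hx
  have hxN : x ∈ N := hDN hx
  have h7 : (⟨x, hxN⟩ : ↥N) ∈ (R₂ : Subgroup ↥N) := hR₂ (Subgroup.mem_subgroupOf.mpr hx)
  have h8 : n * (⟨x, hxN⟩ : ↥N) * n⁻¹ ∈ (R₁ : Subgroup ↥N) := by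
    rw [← hn, Sylow.coe_subgroup_smul, Subgroup.mem_pointwise_smul_iff_inv_smul_mem]
    simpa [mul_assoc] using h7
  rw [← hR₁eq] at h8
  exact Subgroup.mem_subgroupOf.mp h8

end L2

/-- **Fully centralized criterion.** Let `S` be a Sylow `p`-subgroup of the finite group
`G` and `Q ⊴ P ≤ S`. If `P` is fully normalized and `C_S(gQg⁻¹) ≤ P` for every
`g ∈ N_G(P)`, then `Q` is fully centralized. -/
theorem fully_centralized_of_centralizers_le
    (p : ℕ) [Fact p.Prime] (G : Type) [Group G] [Finite G]
    (S : Sylow p G) (P Q : Subgroup G) (hPS : P ≤ (S : Subgroup G))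
    (hQP : Q ≤ P) (hQnormal : ∀ g ∈ P, ∀ x ∈ Q, g * x * g⁻¹ ∈ Q)
    (hfullnorm : ∀ g : G, (∀ x ∈ P, g * x * g⁻¹ ∈ (S : Subgroup G)) →
      Nat.card ((S : Subgroup G) ⊓ Subgroup.normalizer ((conjSub g P : Subgroup G) : Set G) : Subgroup G) ≤
        Nat.card ((S : Subgroup G) ⊓ Subgroup.normalizer ((P : Subgroup G) : Set G) : Subgroup G))
    (hcent : ∀ g ∈ Subgroup.normalizer ((P : Subgroup G) : Set G),
      (S : Subgroup G) ⊓ Subgroup.centralizer ((conjSub g Q : Subgroup G) : Set G) ≤ P) :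
    ∀ g : G, (∀ x ∈ Q, g * x * g⁻¹ ∈ (S : Subgroup G)) →
      Nat.card ((S : Subgroup G) ⊓ Subgroup.centralizer ((conjSub g Q : Subgroup G) : Set G) : Subgroup G) ≤
        Nat.card ((S : Subgroup G) ⊓ Subgroup.centralizer ((Q : Subgroup G) : Set G) : Subgroup G) := by
  intro g _hg
  classical
  set Z := Subgroup.centralizer ((Q : Subgroup G) : Set G) with hZdef
  set M := Subgroup.normalizer (Q : Set G) with hMdef
  have hPM : P ≤ M := fun a ha => mem_normalizer_of_conj (fun x hx => hQnormal a ha x hx)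
  have hZM : Z ≤ M := by
    intro z hz
    apply mem_normalizer_of_conj
    intro x hx
    have hc := Subgroup.mem_centralizer_iff.mp hz x hx
    have : z * x * z⁻¹ = x := by rw [← hc]; group
    rw [this]; exact hx
  have hMZ : ∀ m ∈ M, ∀ z ∈ Z, m * z * m⁻¹ ∈ Z := by
    intro m hm z hz
    rw [Subgroup.mem_centralizer_iff]
    intro q hq
    have hq' : m⁻¹ * q * m ∈ Q := by
      simpa using conj_mem_of_mem_normalizer (inv_mem hm) hq
    have hcomm := Subgroup.mem_centralizer_iff.mp hz _ hq'
    calc q * (m * z * m⁻¹) = m * ((m⁻¹ * q * m) * z) * m⁻¹ := by group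
      _ = m * (z * (m⁻¹ * q * m)) * m⁻¹ := by rw [hcomm]
      _ = (m * z * m⁻¹) * q := by group
  -- a p-subgroup of Z of maximal cardinality
  obtain ⟨V⟩ : Nonempty (Sylow p ↥Z) := Sylow.nonempty
  set Zv := Subgroup.map Z.subtype (V : Subgroup ↥Z) with hZvdef
  have hZvZ : Zv ≤ Z := Subgroup.map_subtype_le _
  have hZvpg : IsPGroup p Zv := V.isPGroup'.map _
  have hmaxZ : ∀ W : Subgroup G, W ≤ Z → IsPGroup p W → Nat.card W ≤ Nat.card Zv := by
    intro W hWZ hWpg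
    obtain ⟨R₂, hR₂⟩ := (isPGroup_subgroupOf hWpg hWZ).exists_le_sylow
    have e : Nat.card W = Nat.card (W.subgroupOf Z) :=
      (Nat.card_congr (Subgroup.subgroupOfEquivOfLe hWZ).toEquiv).symm
    have e2 : Nat.card Zv = Nat.card (V : Subgroup ↥Z) :=
      (Nat.card_congr ((V : Subgroup ↥Z).equivMapOfInjective Z.subtype
        Z.subtype_injective).toEquiv).symm
    rw [e, e2]
    calc Nat.card (W.subgroupOf Z) ≤ Nat.card R₂ := Subgroup.card_le_of_le hR₂
      _ = Nat.card (V : Subgroup ↥Z) := by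
          rw [Sylow.card_eq_multiplicity, Sylow.card_eq_multiplicity]
  -- choose a Sylow of M containing P whose intersection with Z is big
  obtain ⟨W₀, hW₀⟩ := (isPGroup_subgroupOf hZvpg (hZvZ.trans hZM)).exists_le_sylow
  obtain ⟨W₁, hW₁⟩ := (isPGroup_subgroupOf (S.isPGroup'.to_le hPS) hPM).exists_le_sylow
  obtain ⟨m, hm⟩ := MulAction.exists_smul_eq ↥M W₀ W₁
  set U := Subgroup.map M.subtype (W₁ : Subgroup ↥M) with hUdef
  have hUM : U ≤ M := Subgroup.map_subtype_le _
  have hUpg : IsPGroup p U := W₁.isPGroup'.map _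
  have hPU : P ≤ U := by
    calc P = Subgroup.map M.subtype (P.subgroupOf M) := by
          rw [Subgroup.subgroupOf_map_subtype, inf_eq_left.mpr hPM]
      _ ≤ _ := Subgroup.map_mono hW₁
  have hT₁U : ∀ v ∈ Zv, (m : G) * v * (m : G)⁻¹ ∈ U := by
    intro v hv
    have hvM : v ∈ M := hZM (hZvZ hv)
    have h9 : (⟨v, hvM⟩ : ↥M) ∈ (W₀ : Subgroup ↥M) := hW₀ (Subgroup.mem_subgroupOf.mpr hv)
    have h10 : m * (⟨v, hvM⟩ : ↥M) * m⁻¹ ∈ (W₁ : Subgroup ↥M) := by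
      rw [← hm, Sylow.coe_subgroup_smul, Subgroup.mem_pointwise_smul_iff_inv_smul_mem]
      simpa [mul_assoc] using h9
    exact ⟨_, h10, rfl⟩
  set T := U ⊓ Z with hTdef
  have hTpg : IsPGroup p T := hUpg.to_inf_left
  have hcardT : Nat.card Zv ≤ Nat.card T := by
    rw [← card_conjSub (m : G) Zv]
    apply Subgroup.card_le_of_le
    intro y hy
    obtain ⟨v, hv, rfl⟩ := mem_conjSub.mp hy
    exact ⟨hT₁U v hv, hMZ _ m.2 v (hZvZ hv)⟩
  have hNT : T ⊓ Subgroup.normalizer (P : Set G) ≤ P := by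
    obtain ⟨n, hnN, hconj⟩ := conj_into_NS S P hPS hfullnorm (T ⊓ Subgroup.normalizer (P : Set G))
      inf_le_right hTpg.to_inf_left
    rintro t ⟨htT, htN⟩
    have h11 := hconj t ⟨htT, htN⟩
    have h12 : n * t * n⁻¹ ∈ Subgroup.centralizer ((conjSub n Q : Subgroup G) : Set G) := by
      rw [Subgroup.mem_centralizer_iff]
      rintro y hy
      obtain ⟨q, hq, rfl⟩ := mem_conjSub.mp hy
      have hc := Subgroup.mem_centralizer_iff.mp htT.2 q hq
      calc (n * q * n⁻¹) * (n * t * n⁻¹) = n * (q * t) * n⁻¹ := by group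
        _ = n * (t * q) * n⁻¹ := by rw [hc]
        _ = (n * t * n⁻¹) * (n * q * n⁻¹) := by group
    have h13 : n * t * n⁻¹ ∈ P := hcent n hnN ⟨h11.1, h12⟩
    exact mem_of_conj_mem_normalizer hnN h13
  have hTP : T ≤ P := by
    apply pgroup_le_of_normalizer_inf_le hUpg hPU inf_le_left _ hNT
    intro u hu t ht
    exact ⟨U.mul_mem (U.mul_mem hu ht.1) (U.inv_mem hu), hMZ u (hUM hu) t ht.2⟩
  have hTCS : T ≤ (S : Subgroup G) ⊓ Z := fun t ht => ⟨hPS (hTP ht), ht.2⟩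
  have hWg : conjSub g⁻¹ ((S : Subgroup G) ⊓
      Subgroup.centralizer ((conjSub g Q : Subgroup G) : Set G)) ≤ Z := by
    intro y hy
    obtain ⟨w, hw, rfl⟩ := mem_conjSub.mp hy
    rw [Subgroup.mem_centralizer_iff]
    intro q hq
    have h14 : g * q * g⁻¹ ∈ conjSub g Q := conjSub_mem hq
    have hc := Subgroup.mem_centralizer_iff.mp hw.2 _ h14
    calc q * (g⁻¹ * w * g⁻¹⁻¹) = g⁻¹ * ((g * q * g⁻¹) * w) * g := by group
      _ = g⁻¹ * (w * (g * q * g⁻¹)) * g := by rw [hc]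
      _ = (g⁻¹ * w * g⁻¹⁻¹) * q := by group
  calc Nat.card ((S : Subgroup G) ⊓
        Subgroup.centralizer ((conjSub g Q : Subgroup G) : Set G) : Subgroup G)
      = Nat.card (conjSub g⁻¹ ((S : Subgroup G) ⊓
          Subgroup.centralizer ((conjSub g Q : Subgroup G) : Set G))) := (card_conjSub _ _).symm
    _ ≤ Nat.card Zv := hmaxZ _ hWg (conjSub_isPGroup S.isPGroup'.to_inf_left)
    _ ≤ Nat.card T := hcardT
    _ ≤ Nat.card ((S : Subgroup G) ⊓ Z : Subgroup G) := Subgroup.card_le_of_le hTCS
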